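/- Let a > 0, let η_a(t) = e^{−at}·1_{(0,∞)}(t), and let f(t) = t·e^{−at}·1_{(0,∞)}(t) (that is, f = η_a ∗ η_a). Then the ambiguity function A(f,η_a) has no zeros: A(f,η_a)(x,ξ) ≠ 0 for every (x,ξ) ∈ ℝ². -/

import Mathlib

open MeasureTheory Complex

/-- The cross-ambiguity function of `f, g : ℝ → ℂ`. -/
noncomputable def ambiguity (f g : ℝ → ℂ) (x ξ : ℝ) : ℂ :=
  ∫ t : ℝ, f (t + x / 2) * (starRingEnd ℂ) (g (t - x / 2)) *
    Complex.exp (-2 * Real.pi * Complex.I * ξ * t)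

/-- The one-sided exponential `η_a(t) = e^{-at} 1_{(0,∞)}(t)`. -/
noncomputable def eta (a : ℝ) : ℝ → ℂ :=
  fun t => if 0 < t then Complex.exp (-(a : ℂ) * t) else 0

section aux

open Set Filter Real Topology

lemma tendsto_exp_neg_mul_zero {r : ℝ} (hr : 0 < r) :
    Tendsto (fun t : ℝ => Real.exp (-r * t)) atTop (𝓝 0) :=
  Real.tendsto_exp_atBot.comp (tendsto_id.const_mul_atTop_of_neg (by linarith))

lemma tendsto_abs_add_mul_exp {r : ℝ} (hr : 0 < r) (k : ℝ) :
    Tendsto (fun t : ℝ => (|t| + k) * Real.exp (-r * t)) atTop (𝓝 0) := by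
  have h1 : Tendsto (fun t : ℝ => (r * t) * Real.exp (-(r * t))) atTop (𝓝 0) := by
    have := (Real.tendsto_pow_mul_exp_neg_atTop_nhds_zero 1).comp
      (tendsto_id.const_mul_atTop hr)
    simpa [Function.comp_def] using this
  have h2 : Tendsto (fun t : ℝ => t * Real.exp (-r * t)) atTop (𝓝 0) := by
    have := h1.const_mul (1 / r)
    rw [mul_zero] at this
    refine this.congr (fun t => ?_)
    field_simp
  have h3 : Tendsto (fun t : ℝ => t * Real.exp (-r * t) + k * Real.exp (-r * t))
      atTop (𝓝 0) := by
    simpa using h2.add ((tendsto_exp_neg_mul_zero hr).const_mul k)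
  refine h3.congr' ?_
  filter_upwards [eventually_ge_atTop (0:ℝ)] with t ht
  rw [_root_.abs_of_nonneg ht]; ring

lemma integrableOn_abs_add_mul_exp {r : ℝ} (hr : 0 < r) (k m : ℝ) :
    IntegrableOn (fun t : ℝ => (|t| + k) * Real.exp (-r * t)) (Ioi m) := by
  refine integrable_of_isBigO_exp_neg (half_pos hr)
    (by fun_prop) ?_
  have hlo : (fun t : ℝ => (|t| + k) * Real.exp (-r * t)) =o[atTop]
      fun t => Real.exp (-(r/2) * t) := by
    rw [Asymptotics.isLittleO_iff_tendsto (fun x h => absurd h (Real.exp_ne_zero _))]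
    have heq : ∀ᶠ t in atTop, ((|t| + k) * Real.exp (-r * t)) / Real.exp (-(r/2) * t)
        = (|t| + k) * Real.exp (-(r/2) * t) := by
      filter_upwards with t
      rw [mul_div_assoc, ← Real.exp_sub]
      ring_nf
    rw [tendsto_congr' heq]
    exact tendsto_abs_add_mul_exp (half_pos hr) k
  exact hlo.isBigO

lemma norm_re_exp (c : ℂ) (t : ℝ) : ‖Complex.exp (-c * t)‖ = Real.exp (-c.re * t) := by
  rw [Complex.norm_exp]
  congr 1
  simp [Complex.mul_re]

lemma integrableOn_main {c : ℂ} (hc : 0 < c.re) (d : ℂ) (m : ℝ) :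
    IntegrableOn (fun t : ℝ => ((t : ℂ) + d) * Complex.exp (-c * t)) (Ioi m) := by
  refine Integrable.mono' (integrableOn_abs_add_mul_exp hc ‖d‖ m) ?_ ?_
  · exact (Continuous.aestronglyMeasurable (by fun_prop)).restrict
  · filter_upwards with t
    rw [norm_mul, norm_re_exp]
    gcongr
    calc ‖(t : ℂ) + d‖ ≤ ‖(t : ℂ)‖ + ‖d‖ := norm_add_le _ _
      _ = |t| + ‖d‖ := by rw [Complex.norm_real, Real.norm_eq_abs]

lemma hasDerivAt_anti {c : ℂ} (hc : c ≠ 0) (d : ℂ) (t : ℝ) :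
    HasDerivAt (fun t : ℝ => -(((t : ℂ) + d) * Complex.exp (-c * t)) / c
        - Complex.exp (-c * t) / c ^ 2)
      (((t : ℂ) + d) * Complex.exp (-c * t)) t := by
  have key : ∀ w : ℂ, HasDerivAt (fun w : ℂ => -((w + d) * Complex.exp (-c * w)) / c
      - Complex.exp (-c * w) / c ^ 2) ((w + d) * Complex.exp (-c * w)) w := by
    intro w
    have hexp : HasDerivAt (fun w : ℂ => Complex.exp (-c * w)) (-c * Complex.exp (-c * w)) w := by
      simpa [Function.comp_def, neg_mul, mul_comm] using
        (Complex.hasDerivAt_exp (-c * w)).comp w ((hasDerivAt_id w).const_mul (-c))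
    have h1 : HasDerivAt (fun w : ℂ => (w + d) * Complex.exp (-c * w))
        (1 * Complex.exp (-c * w) + (w + d) * (-c * Complex.exp (-c * w))) w :=
      ((hasDerivAt_id w).add_const d).mul hexp
    have h2 := ((h1.neg.div_const c).sub (hexp.div_const (c ^ 2)))
    refine HasDerivAt.congr_deriv h2 ?_
    field_simp
    ring
  simpa using (key (t : ℂ)).comp_ofReal

lemma integral_shifted {c : ℂ} (hc : 0 < c.re) (d : ℂ) (m : ℝ) :
    ∫ t in Ioi m, ((t : ℂ) + d) * Complex.exp (-c * t)
      = ((m : ℂ) + d) * Complex.exp (-c * m) / c + Complex.exp (-c * m) / c ^ 2 := by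
  have hc0 : c ≠ 0 := fun h => by simp [h] at hc
  have htend : Tendsto (fun t : ℝ => -(((t : ℂ) + d) * Complex.exp (-c * t)) / c
      - Complex.exp (-c * t) / c ^ 2) atTop (𝓝 0) := by
    have hg : Tendsto (fun t : ℝ =>
        (1 / ‖c‖) * ((|t| + ‖d‖) * Real.exp (-c.re * t)) + (1 / ‖c‖ ^ 2) * Real.exp (-c.re * t))
        atTop (𝓝 0) := by
      have := ((tendsto_abs_add_mul_exp hc ‖d‖).const_mul (1 / ‖c‖)).add
        ((tendsto_exp_neg_mul_zero hc).const_mul (1 / ‖c‖ ^ 2))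
      simpa using this
    refine squeeze_zero_norm (fun t => ?_) hg
    · refine (norm_sub_le _ _).trans ?_
      rw [norm_div, norm_div, norm_neg, norm_mul, norm_pow, norm_re_exp]
      have h1 : ‖(t : ℂ) + d‖ ≤ |t| + ‖d‖ := by
        calc ‖(t : ℂ) + d‖ ≤ ‖(t : ℂ)‖ + ‖d‖ := norm_add_le _ _
          _ = |t| + ‖d‖ := by rw [Complex.norm_real, Real.norm_eq_abs]
      have hcpos : 0 < ‖c‖ := norm_pos_iff.mpr hc0
      rw [div_eq_mul_inv, div_eq_mul_inv]
      have he : (0:ℝ) ≤ Real.exp (-c.re * t) := (Real.exp_pos _).le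
      have h2 : ‖(t:ℂ) + d‖ * Real.exp (-c.re * t) * ‖c‖⁻¹
          ≤ (|t| + ‖d‖) * Real.exp (-c.re * t) * ‖c‖⁻¹ := by
        have : (0:ℝ) ≤ ‖c‖⁻¹ := (inv_pos.mpr hcpos).le
        gcongr
      rw [one_div, one_div]
      linarith [h2]
  have := integral_Ioi_of_hasDerivAt_of_tendsto'
    (f := fun t : ℝ => -(((t : ℂ) + d) * Complex.exp (-c * t)) / c
        - Complex.exp (-c * t) / c ^ 2)
    (fun t _ => hasDerivAt_anti hc0 d t) (integrableOn_main hc d m) htend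
  rw [this]
  field_simp
  ring

lemma final_ne {c : ℂ} (hc : 0 < c.re) {b : ℝ} (hb : 0 ≤ b) (m : ℝ) :
    (b : ℂ) * Complex.exp (-c * (m : ℂ)) / c + Complex.exp (-c * (m : ℂ)) / c ^ 2 ≠ 0 := by
  have hc0 : c ≠ 0 := fun h => by simp [h] at hc
  have hEne : Complex.exp (-c * (m : ℂ)) ≠ 0 := Complex.exp_ne_zero _
  have hbc : (b : ℂ) * c + 1 ≠ 0 := by
    intro h
    have h0 : ((b : ℂ) * c + 1).re = 0 := by rw [h]; simp
    rw [Complex.add_re, Complex.one_re, Complex.mul_re, Complex.ofReal_re,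
      Complex.ofReal_im] at h0
    nlinarith [mul_nonneg hb hc.le]
  have hval : (b : ℂ) * Complex.exp (-c * (m : ℂ)) / c + Complex.exp (-c * (m : ℂ)) / c ^ 2
      = Complex.exp (-c * (m : ℂ)) * ((b : ℂ) * c + 1) / c ^ 2 := by
    field_simp
  rw [hval]
  exact div_ne_zero (mul_ne_zero hEne hbc) (pow_ne_zero _ hc0)

end aux

theorem ambiguity_teta_eta_ne_zero (a : ℝ) (ha : 0 < a) :
    ∀ x ξ : ℝ,
      ambiguity (fun t => if 0 < t then (t : ℂ) * Complex.exp (-(a : ℂ) * t) else 0)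
        (eta a) x ξ ≠ 0 := by
  intro x ξ
  set m : ℝ := |x| / 2 with hm
  set c : ℂ := 2 * a + 2 * Real.pi * ξ * Complex.I with hc
  set d : ℂ := (x : ℂ) / 2 with hd
  have hcre : 0 < c.re := by
    have : c.re = 2 * a := by simp [hc]
    rw [this]; linarith
  have hc0 : c ≠ 0 := fun h => by simp [h] at hcre
  have hstep : ambiguity (fun t => if 0 < t then (t : ℂ) * Complex.exp (-(a : ℂ) * t) else 0)
      (eta a) x ξ = ∫ t in Set.Ioi m, ((t : ℂ) + d) * Complex.exp (-c * t) := by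
    rw [ambiguity, ← MeasureTheory.integral_indicator measurableSet_Ioi]
    congr 1
    funext t
    rw [Set.indicator_apply]
    by_cases ht : t ∈ Set.Ioi m
    · rw [if_pos ht]
      have htm : m < t := ht
      have h1 : 0 < t + x / 2 := by
        have := neg_abs_le x; rw [hm] at htm; linarith
      have h2 : 0 < t - x / 2 := by
        have := le_abs_self x; rw [hm] at htm; linarith
      rw [if_pos h1]
      simp only [_root_.eta]
      rw [if_pos h2]
      rw [← Complex.exp_conj]
      have hconj : (starRingEnd ℂ) (-(a : ℂ) * ((t - x / 2 : ℝ) : ℂ))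
          = -(a : ℂ) * ((t - x / 2 : ℝ) : ℂ) := by
        simp [map_mul, map_sub, map_div₀, map_ofNat, Complex.conj_ofReal]
      rw [hconj]
      have hexp : Complex.exp (-(a : ℂ) * ((t + x / 2 : ℝ) : ℂ))
            * Complex.exp (-(a : ℂ) * ((t - x / 2 : ℝ) : ℂ))
            * Complex.exp (-2 * Real.pi * Complex.I * ξ * t)
          = Complex.exp (-c * t) := by
        rw [← Complex.exp_add, ← Complex.exp_add]
        congr 1
        rw [hc]
        push_cast
        ring
      rw [← hexp, hd]
      push_cast
      ring
    · rw [if_neg ht]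
      rw [Set.mem_Ioi, not_lt] at ht
      by_cases h1 : 0 < t + x / 2
      · have h2 : ¬ 0 < t - x / 2 := by
          intro h2
          have hx1 : -x / 2 < t := by linarith
          have hx2 : x / 2 < t := by linarith
          have : |x| / 2 < t := by
            rcases abs_cases x with ⟨h, _⟩ | ⟨h, _⟩ <;> rw [h] <;> linarith
          rw [hm] at ht; linarith
        simp only [_root_.eta]
        rw [if_neg h2]
        simp
      · rw [if_neg h1]
        simp
  rw [hstep, integral_shifted hcre d m]
  set b : ℝ := m + x / 2 with hb
  have hb0 : 0 ≤ b := by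
    have := neg_abs_le x; rw [hb, hm]; linarith
  have hmd : (m : ℂ) + d = (b : ℝ) := by rw [hb, hd]; push_cast; ring
  rw [hmd]
  exact final_ne hcre hb0 m
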